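/- Let M be an additive submonoid of Fin n → ℤ and let m ∈ M. Let M' be the additive submonoid of Fin n → ℤ generated by M ∪ {−m}. Then there is a ℂ-algebra isomorphism between AddMonoidAlgebra ℂ M' and the localization of AddMonoidAlgebra ℂ M away from the element AddMonoidAlgebra.single m 1 (i.e., Localization.Away (single m 1)). -/

import Mathlib

open AddMonoidAlgebra

/-- Lemma 3.7 (algebraic content): inverting the character `χ^m` of the monoid
algebra of `M` corresponds to adjoining `-m` to the monoid: there is a
ℂ-algebra isomorphism
`AddMonoidAlgebra ℂ M' ≃ₐ[ℂ] Localization.Away (single m 1)`,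
where `M'` is generated by `M ∪ {-m}`. -/
theorem monoidAlgebra_adjoin_neg_iso_localization_away
    (n : ℕ) (M : AddSubmonoid (Fin n → ℤ)) (m : Fin n → ℤ) (hm : m ∈ M)
    (M' : AddSubmonoid (Fin n → ℤ))
    (hM' : M' = AddSubmonoid.closure ((M : Set (Fin n → ℤ)) ∪ {-m})) :
    Nonempty (AddMonoidAlgebra ℂ M' ≃ₐ[ℂ]
      Localization.Away (AddMonoidAlgebra.single (⟨m, hm⟩ : M) (1 : ℂ))) := by
  have hMle : M ≤ M' := by
    rw [hM']
    exact fun x hx => AddSubmonoid.subset_closure (Or.inl hx)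
  have hnm : -m ∈ M' := by
    rw [hM']
    exact AddSubmonoid.subset_closure (Or.inr rfl)
  set R := AddMonoidAlgebra ℂ M with hR
  set S := AddMonoidAlgebra ℂ M' with hS
  set ι : M →+ M' := AddSubmonoid.inclusion hMle with hι
  set f : R →ₐ[ℂ] S := mapDomainAlgHom ℂ ℂ ι with hf
  have hfsingle : ∀ (a : M) (c : ℂ), f (AddMonoidAlgebra.single a c)
      = AddMonoidAlgebra.single (ι a) c := fun a c => AddMonoidAlgebra.mapDomain_single
  set s : R := AddMonoidAlgebra.single (⟨m, hm⟩ : M) (1 : ℂ) with hs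
  set mM : M' := ⟨m, hMle hm⟩ with hmM
  -- key: each element of M' lifts after adding k • m
  have key : ∀ x ∈ M', ∃ k : ℕ, x + k • m ∈ M := by
    let N : AddSubmonoid (Fin n → ℤ) :=
      { carrier := {y | ∃ k : ℕ, y + k • m ∈ M}
        zero_mem' := ⟨0, by simpa using M.zero_mem⟩
        add_mem' := by
          rintro a b ⟨k₁, hk₁⟩ ⟨k₂, hk₂⟩
          refine ⟨k₁ + k₂, ?_⟩
          have h : a + b + (k₁ + k₂) • m = (a + k₁ • m) + (b + k₂ • m) := by
            rw [add_nsmul]; abel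
          rw [h]; exact M.add_mem hk₁ hk₂ }
    have hle : M' ≤ N := by
      rw [hM']
      refine AddSubmonoid.closure_le.mpr ?_
      rintro y (hy | hy)
      · exact ⟨0, by simpa using hy⟩
      · rcases hy with rfl
        exact ⟨1, by simpa using M.zero_mem⟩
    exact fun x hx => hle hx
  -- algebra structure on S over R via f
  letI : Algebra R S := f.toRingHom.toAlgebra
  have halg : ∀ x : R, algebraMap R S x = f x := fun _ => rfl
  haveI : IsScalarTower ℂ R S := IsScalarTower.of_algebraMap_eq fun c => (f.commutes c).symm
  -- f s is a unit
  have hfs : f s = AddMonoidAlgebra.single mM 1 := by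
    rw [hs, hfsingle]
    congr 1
  have hunit : IsUnit (f s) := by
    refine IsUnit.of_mul_eq_one (AddMonoidAlgebra.single (⟨-m, hnm⟩ : M') 1) ?_
    rw [hfs, AddMonoidAlgebra.single_mul_single]
    have h0 : mM + (⟨-m, hnm⟩ : M') = 0 := Subtype.ext (by simp [hmM])
    rw [h0, mul_one]
    exact (AddMonoidAlgebra.one_def).symm
  have hsk : ∀ k : ℕ, f (s ^ k) = AddMonoidAlgebra.single (k • mM) 1 := by
    intro k
    rw [map_pow, hfs, AddMonoidAlgebra.single_pow, one_pow]
  -- injectivity of f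
  have hιinj : Function.Injective ι := fun a b h => by
    apply Subtype.ext
    have h2 := congrArg Subtype.val h
    exact h2
  have hinj : Function.Injective f := AddMonoidAlgebra.mapDomain_injective hιinj
  -- surjectivity up to powers of s
  have hsurj : ∀ z : S, ∃ x : R × (Submonoid.powers s), z * f x.2 = f x.1 := by
    intro z
    induction z using AddMonoidAlgebra.induction with
    | zero => exact ⟨(0, 1), by simp⟩
    | single_add a c w haw hc ih =>
      obtain ⟨⟨x, t⟩, hx⟩ := ih
      obtain ⟨k₂, hk₂⟩ := t.2
      obtain ⟨k₁, hk₁⟩ := key a a.2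
      set a' : M := ⟨(a : Fin n → ℤ) + k₁ • m, hk₁⟩ with ha'
      have e1 : (AddMonoidAlgebra.single a c : S) * f (s ^ k₁)
          = f (AddMonoidAlgebra.single a' c) := by
        rw [hsk, AddMonoidAlgebra.single_mul_single, hfsingle, mul_one]
        congr 1
      dsimp only at hx hk₂
      refine ⟨(AddMonoidAlgebra.single a' c * s ^ k₂ + x * s ^ k₁,
        ⟨s ^ (k₁ + k₂), k₁ + k₂, rfl⟩), ?_⟩
      dsimp only
      rw [map_add, map_mul, map_mul, ← e1, ← hx, ← hk₂, pow_add, map_mul]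
      ring
  haveI : IsLocalization.Away s S := by
    constructor
    constructor
    · rintro ⟨y, k, rfl⟩
      rw [halg, map_pow]
      exact hunit.pow k
    · intro z
      obtain ⟨x, hx⟩ := hsurj z
      exact ⟨x, by rw [halg, halg]; exact hx⟩
    · intro x y h
      rw [halg, halg] at h
      exact ⟨1, by rw [hinj h]⟩
  exact ⟨(IsLocalization.algEquiv (Submonoid.powers s) S (Localization.Away s)).restrictScalars ℂ⟩
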